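/- Let (W,S) be a Coxeter system and let s₁, s₂, … be a (possibly infinite) sequence of elements of S. For a finite subsequence S′: s_{i₁}, s_{i₂}, …, s_{i_m} of this sequence, let w(S′) denote the element s_{i_m} s_{i_{m−1}} ⋯ s_{i₁} of W. Let K be a subset of W with a unique minimal element u with respect to the Bruhat order. Define recursively u₀ = u and u_{j+1} = u_j ∧ s_{j+1} u_j for j ≥ 0. Then the sequence (u_j) is eventually constant, and the union ∪_{S′} w(S′)K over all finite subsequences S′ (including the empty one) has a unique minimal element in the Bruhat order, equal to the stable value u_∞ of (u_j). -/

import Mathlib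

variable {B W : Type*} [Group W] {M : CoxeterMatrix B}

/-- The (strong) Bruhat order on the Coxeter group `W`: `u ≤ v` if and only if some
reduced word for `v` admits a sublist whose product is `u`. -/
def BruhatLE (cs : CoxeterSystem M W) (u v : W) : Prop :=
  ∃ ω : List B, cs.IsReduced ω ∧ cs.wordProd ω = v ∧
    ∃ ω' : List B, ω'.Sublist ω ∧ cs.wordProd ω' = u

/-- The strict Bruhat order. -/
def BruhatLT (cs : CoxeterSystem M W) (u v : W) : Prop :=
  BruhatLE cs u v ∧ u ≠ v

/-- `m` is the unique minimal element of `K` in the Bruhat order, i.e. `m ∈ K` and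
`m` is Bruhat-below every element of `K`. -/
def IsBrMin (cs : CoxeterSystem M W) (K : Set W) (m : W) : Prop :=
  m ∈ K ∧ ∀ x ∈ K, BruhatLE cs m x

/-- `m` is the unique maximal element of `K` in the Bruhat order, i.e. `m ∈ K` and
`m` is Bruhat-above every element of `K`. -/
def IsBrMax (cs : CoxeterSystem M W) (K : Set W) (m : W) : Prop :=
  m ∈ K ∧ ∀ x ∈ K, BruhatLE cs x m

/-- A standard parabolic subgroup: a subgroup generated by a subset of the simple
reflections. -/
def IsStdParabolic (cs : CoxeterSystem M W) (P : Subgroup W) : Prop :=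
  ∃ X : Set B, P = Subgroup.closure (cs.simple '' X)

/-- The left coset `u•W₁ = {u * b : b ∈ W₁}`. -/
def lCoset (W₁ : Subgroup W) (u : W) : Set W := {x | ∃ b ∈ W₁, x = u * b}

/-- The double coset `W₁ u W₂ = {a * u * b : a ∈ W₁, b ∈ W₂}`. -/
def dblCoset (W₁ W₂ : Subgroup W) (u : W) : Set W :=
  {x | ∃ a ∈ W₁, ∃ b ∈ W₂, x = a * u * b}

namespace BruhatAux

open CoxeterSystem List

lemma zmod2_cases : ∀ x : ZMod 2, x = 0 ∨ x = 1 := by decide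

section invol
variable {G : Type*} [Group G]

lemma conj_eq_iff (g t u : G) : g * t * g⁻¹ = u ↔ t = g⁻¹ * u * g := by
  constructor
  · intro h; rw [← h]; group
  · intro h; rw [h]; group

lemma invol_conj_eq_self_iff {a : G} (ha : a * a = 1) (t : G) :
    (a * t * a = a) ↔ t = a := by
  have hainv : a⁻¹ = a := inv_eq_of_mul_eq_one_right ha
  rw [show a * t * a = a * t * a⁻¹ by rw [hainv], conj_eq_iff, hainv]
  constructor
  · intro h; rw [h, ha, one_mul]
  · intro h; rw [ha, one_mul]; exact h

lemma invol_conj_conj {a : G} (ha : a * a = 1) (t : G) :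
    a * (a * t * a) * a = t := by
  calc a * (a * t * a) * a = (a * a) * t * (a * a) := by group
    _ = t := by rw [ha, one_mul, mul_one]

end invol

variable (cs : CoxeterSystem M W)

local prefix:100 "s" => cs.simple
local prefix:100 "π" => cs.wordProd
local prefix:100 "ℓ" => cs.length

noncomputable local instance : DecidableEq W := Classical.decEq W

/-- The involution on `W × ZMod 2` associated to a simple reflection. -/
noncomputable def permAux (i : B) : Equiv.Perm (W × ZMod 2) :=
  Function.Involutive.toPerm
    (fun p => (s i * p.1 * s i, p.2 + if p.1 = s i then 1 else 0)) (by
      intro p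
      obtain ⟨t, ε⟩ := p
      have h1 : s i * s i = 1 := cs.simple_mul_simple_self i
      simp only [Prod.mk.injEq]
      refine ⟨invol_conj_conj h1 t, ?_⟩
      rw [if_congr (invol_conj_eq_self_iff h1 t) rfl rfl, add_assoc]
      by_cases h : t = s i
      · simp only [h, if_pos]
        have h11 : (1 : ZMod 2) + 1 = 0 := by decide
        show ε + ((1 : ZMod 2) + 1) = ε
        rw [h11, add_zero]
      · simp [h])

lemma permAux_apply (i : B) (t : W) (ε : ZMod 2) :
    permAux cs i (t, ε) = (s i * t * s i, ε + if t = s i then 1 else 0) := rfl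

lemma permAux_pow_apply (i i' : B) (k : ℕ) (t : W) (ε : ZMod 2) :
    ((permAux cs i * permAux cs i') ^ k) (t, ε) =
      ((s i * s i') ^ k * t * ((s i * s i')⁻¹) ^ k,
        ε + ∑ r ∈ Finset.range (2 * k),
          if t = ((s i * s i')⁻¹) ^ r * s i' then 1 else 0) := by
  induction k generalizing t ε with
  | zero => simp
  | succ k ih =>
    have ha : s i * s i = 1 := cs.simple_mul_simple_self i
    have hb : s i' * s i' = 1 := cs.simple_mul_simple_self i'
    have hainv : (s i)⁻¹ = s i := inv_eq_of_mul_eq_one_right ha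
    have hbinv : (s i')⁻¹ = s i' := inv_eq_of_mul_eq_one_right hb
    set q := s i * s i' with hq
    have hsq : s i' * q = q⁻¹ * s i' := by
      rw [hq, mul_inv_rev, hainv, hbinv]; group
    rw [pow_succ]
    have happ : ((permAux cs i * permAux cs i') ^ k * (permAux cs i * permAux cs i')) (t, ε)
        = ((permAux cs i * permAux cs i') ^ k) ((permAux cs i * permAux cs i') (t, ε)) := rfl
    rw [happ]
    have hg : (permAux cs i * permAux cs i') (t, ε)
        = (q * t * q⁻¹, ε + ((if t = s i' then 1 else 0) + if t = q⁻¹ * s i' then 1 else 0)) := by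
      show permAux cs i (permAux cs i' (t, ε)) = _
      rw [permAux_apply, permAux_apply]
      have e1 : s i * (s i' * t * s i') * s i = q * t * q⁻¹ := by
        rw [hq, mul_inv_rev, hainv, hbinv]; group
      have e2 : (s i' * t * s i' = s i) ↔ (t = q⁻¹ * s i') := by
        rw [show s i' * t * s i' = s i' * t * (s i')⁻¹ by rw [hbinv], conj_eq_iff, hbinv,
          hq, mul_inv_rev, hainv, hbinv]
      rw [e1]
      rw [Prod.mk.injEq]
      refine ⟨rfl, ?_⟩
      rw [if_congr e2 rfl rfl, add_assoc]
    rw [hg, ih]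
    have hshift : ∀ r : ℕ, (q * t * q⁻¹ = (q⁻¹) ^ r * s i') ↔ (t = (q⁻¹) ^ (r + 2) * s i') := by
      intro r
      rw [conj_eq_iff]
      have hkey : q⁻¹ * ((q⁻¹) ^ r * s i') * q = (q⁻¹)^(r+2) * s i' := by
        calc q⁻¹ * ((q⁻¹) ^ r * s i') * q = (q⁻¹)^(r+1) * (s i' * q) := by
              rw [pow_succ' q⁻¹]; group
          _ = (q⁻¹)^(r+1) * (q⁻¹ * s i') := by rw [hsq]
          _ = (q⁻¹)^(r+2) * s i' := by rw [pow_succ q⁻¹ (r+1)]; group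
      rw [hkey]
    rw [Prod.mk.injEq]
    constructor
    · rw [pow_succ q k, pow_succ' q⁻¹ k]; group
    · have hsum : ∑ r ∈ Finset.range (2*k),
            (if q*t*q⁻¹ = (q⁻¹)^r * s i' then (1:ZMod 2) else 0)
          = ∑ r ∈ Finset.range (2*k),
            (if t = (q⁻¹)^(r+1+1) * s i' then (1:ZMod 2) else 0) :=
        Finset.sum_congr rfl (fun r _ => if_congr (hshift r) rfl rfl)
      rw [hsum, show 2*(k+1) = 2*k+1+1 from by ring, Finset.sum_range_succ',
        Finset.sum_range_succ']
      simp only [pow_zero, one_mul, zero_add, pow_one]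
      abel

lemma permAux_liftable : M.IsLiftable (permAux cs) := by
  intro i i'
  have hq : (s i * s i') ^ M i i' = 1 := cs.simple_mul_simple_pow i i'
  set m := M i i' with hm
  apply Equiv.ext
  rintro ⟨t, ε⟩
  rw [permAux_pow_apply]
  have hqi : ((s i * s i')⁻¹) ^ m = 1 := by
    rw [inv_pow, hq, inv_one]
  rw [show ((1 : Equiv.Perm (W × ZMod 2))) (t, ε) = (t, ε) from rfl, Prod.mk.injEq]
  constructor
  · rw [hq, hqi, one_mul, mul_one]
  · rw [two_mul, Finset.sum_range_add]
    have heq : ∀ r ∈ Finset.range m,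
        (if t = ((s i * s i')⁻¹)^(m + r) * s i' then (1:ZMod 2) else 0)
        = (if t = ((s i * s i')⁻¹)^r * s i' then (1:ZMod 2) else 0) := by
      intro r _
      rw [pow_add, hqi, one_mul]
    rw [Finset.sum_congr rfl heq]
    generalize (∑ r ∈ Finset.range m,
      (if t = ((s i * s i')⁻¹)^r * s i' then (1:ZMod 2) else 0)) = S
    have h2 : S + S = 0 := by
      rcases zmod2_cases S with h | h <;> rw [h] <;> decide
    rw [h2, add_zero]

/-- The bookkeeping homomorphism into permutations of `W × ZMod 2`. -/
noncomputable def rho : W →* Equiv.Perm (W × ZMod 2) :=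
  cs.lift ⟨permAux cs, permAux_liftable cs⟩

lemma rho_simple (i : B) : rho cs (s i) = permAux cs i :=
  cs.lift_apply_simple (permAux_liftable cs) i

/-- `ZMod 2`-valued count of `t` in the left inversion sequence of `ω`. -/
noncomputable def cnt (ω : List B) (t : W) : ZMod 2 :=
  ((cs.leftInvSeq ω).map (fun x => if x = t then (1 : ZMod 2) else 0)).sum

lemma cnt_cons (i : B) (ω : List B) (t : W) :
    cnt cs (i :: ω) t
      = (if s i = t then (1:ZMod 2) else 0) + cnt cs ω (s i * t * s i) := by
  have ha : s i * s i = 1 := cs.simple_mul_simple_self i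
  have hainv : (s i)⁻¹ = s i := inv_eq_of_mul_eq_one_right ha
  show ((s i :: List.map (MulAut.conj (s i)) (cs.leftInvSeq ω)).map
      (fun x => if x = t then (1 : ZMod 2) else 0)).sum = _
  rw [List.map_cons, List.sum_cons]
  congr 1
  unfold cnt
  rw [List.map_map]
  apply congrArg
  apply List.map_congr_left
  intro x _
  show (if (MulAut.conj (s i)) x = t then (1:ZMod 2) else 0) = _
  have hc : (MulAut.conj (s i)) x = s i * x * s i := by
    rw [MulAut.conj_apply, hainv]
  rw [hc]
  have hiff : (s i * x * s i = t) ↔ (x = s i * t * s i) := by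
    constructor
    · intro h; rw [← h, invol_conj_conj ha]
    · intro h; rw [h, invol_conj_conj ha]
  rw [if_congr hiff rfl rfl]

lemma rho_wordProd (ω : List B) (t : W) (ε : ZMod 2) :
    rho cs (π ω) (t, ε) = (π ω * t * (π ω)⁻¹, ε + cnt cs ω (π ω * t * (π ω)⁻¹)) := by
  induction ω generalizing t ε with
  | nil =>
    rw [cs.wordProd_nil, map_one]
    show (t, ε) = _
    rw [Prod.mk.injEq]
    constructor
    · group
    · show ε = ε + cnt cs [] _
      show ε = ε + 0
      rw [add_zero]
  | cons i ω ih =>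
    have ha : s i * s i = 1 := cs.simple_mul_simple_self i
    have hainv : (s i)⁻¹ = s i := inv_eq_of_mul_eq_one_right ha
    rw [cs.wordProd_cons, map_mul, rho_simple, Equiv.Perm.mul_apply, ih, permAux_apply]
    set w := π ω with hw
    rw [Prod.mk.injEq]
    constructor
    · rw [mul_inv_rev, hainv]; group
    · rw [cnt_cons]
      have hT : s i * w * t * (s i * w)⁻¹ = s i * (w * t * w⁻¹) * s i := by
        rw [mul_inv_rev, hainv]; group
      rw [hT, invol_conj_conj ha]
      have hcond : (s i = s i * (w * t * w⁻¹) * s i) ↔ (w * t * w⁻¹ = s i) := by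
        rw [eq_comm, invol_conj_eq_self_iff ha]
      rw [if_congr hcond rfl rfl]
      abel

/-- Parity of the number of times `t` occurs in the left inversion sequence of any
word for `w`. -/
noncomputable def Npar (w t : W) : ZMod 2 := (rho cs w ((w⁻¹ * t * w), 0)).2

lemma Npar_eq_cnt (ω : List B) (t : W) : Npar cs (π ω) t = cnt cs ω t := by
  show (rho cs (π ω) (((π ω)⁻¹ * t * (π ω)), 0)).2 = _
  rw [rho_wordProd]
  have h : π ω * ((π ω)⁻¹ * t * (π ω)) * (π ω)⁻¹ = t := by group
  rw [h]
  show 0 + cnt cs ω t = cnt cs ω t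
  rw [zero_add]

lemma rho_apply (w x : W) (ε : ZMod 2) :
    rho cs w (x, ε) = (w * x * w⁻¹, ε + Npar cs w (w * x * w⁻¹)) := by
  obtain ⟨ω, rfl⟩ := cs.wordProd_surjective w
  rw [rho_wordProd, Npar_eq_cnt]

lemma Npar_mul (a b t : W) :
    Npar cs (a * b) t = Npar cs a t + Npar cs b (a⁻¹ * t * a) := by
  show (rho cs (a * b) ((a*b)⁻¹ * t * (a*b), 0)).2 = _
  rw [map_mul, Equiv.Perm.mul_apply]
  have h1 : (a*b)⁻¹ * t * (a*b) = b⁻¹ * (a⁻¹ * t * a) * b := by group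
  rw [h1, rho_apply cs b]
  have h2 : b * (b⁻¹ * (a⁻¹ * t * a) * b) * b⁻¹ = a⁻¹ * t * a := by group
  rw [h2, rho_apply cs a]
  have h3 : a * (a⁻¹ * t * a) * a⁻¹ = t := by group
  rw [h3]
  show (0 + Npar cs b _) + Npar cs a _ = _
  rw [zero_add, add_comm]

lemma Npar_one (t : W) : Npar cs 1 t = 0 := by
  show (rho cs 1 _).2 = 0
  rw [map_one]
  rfl

lemma Npar_simple (i : B) (t : W) :
    Npar cs (s i) t = if s i = t then 1 else 0 := by
  have h := Npar_eq_cnt cs [i] t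
  rw [cs.wordProd_singleton] at h
  rw [h]
  show ((cs.leftInvSeq [i]).map _).sum = _
  rw [cs.leftInvSeq_singleton]
  show (if s i = t then (1:ZMod 2) else 0) + 0 = _
  rw [add_zero]

lemma Npar_reflection_self {t : W} (ht : cs.IsReflection t) : Npar cs t t = 1 := by
  obtain ⟨z, i, rfl⟩ := ht
  set t := z * s i * z⁻¹ with hts
  have e1 : z * (s i * z⁻¹) = t := by rw [hts]; group
  have h1 := Npar_mul cs z (s i * z⁻¹) t
  rw [e1] at h1
  have hz : z⁻¹ * t * z = s i := by rw [hts]; group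
  rw [hz] at h1
  have h2 : Npar cs (s i * z⁻¹) (s i)
      = Npar cs (s i) (s i) + Npar cs z⁻¹ ((s i)⁻¹ * (s i) * (s i)) := Npar_mul cs _ _ _
  have h3 : (s i)⁻¹ * (s i) * (s i) = s i := by group
  rw [h3, Npar_simple, if_pos rfl] at h2
  have h4 : (0 : ZMod 2) = Npar cs z t + Npar cs z⁻¹ (s i) := by
    have := Npar_mul cs z z⁻¹ t
    rw [mul_inv_cancel, Npar_one, hz] at this
    exact this
  rw [h1, h2]
  linear_combination (-1 : ZMod 2) * h4

lemma Npar_eq_one_iff {t : W} (ht : cs.IsReflection t) :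
    ∀ n (w : W), ℓ w ≤ n → (Npar cs w t = 1 ↔ ℓ (t * w) < ℓ w) := by
  intro n
  induction n with
  | zero =>
    intro w hw
    have hone : w = 1 := cs.length_eq_zero_iff.mp (Nat.le_antisymm hw (Nat.zero_le _))
    rw [hone, mul_one, Npar_one, cs.length_one]
    constructor
    · intro h; exact absurd h (by decide)
    · intro h; omega
  | succ n IH =>
    intro w hw
    by_cases hle : ℓ w ≤ n
    · exact IH w hle
    push_neg at hle
    have hw1 : w ≠ 1 := by
      intro h; rw [h, cs.length_one] at hle; omega
    have hne : ℓ (t * w) ≠ ℓ w := ht.length_mul_right_ne w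
    constructor
    · intro hN
      by_contra hcon
      have hgt : ℓ w < ℓ (t * w) := by omega
      obtain ⟨i, hi⟩ := cs.exists_rightDescent_of_ne_one hw1
      have ha : s i * s i = 1 := cs.simple_mul_simple_self i
      set v := w * s i with hv
      have hvw : v * s i = w := by rw [hv, mul_assoc, ha, mul_one]
      have hlv : ℓ v < ℓ w := hi
      have hsplit : Npar cs w t = Npar cs v t + Npar cs (s i) (v⁻¹ * t * v) := by
        conv_lhs => rw [← hvw]
        rw [Npar_mul]
      by_cases hcase : v⁻¹ * t * v = s i
      · have htv : t * w = v := by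
          have h' : t = v * s i * v⁻¹ := by rw [← hcase]; group
          rw [h', ← hvw]
          have hx : v * s i * v⁻¹ * (v * s i) = v * (s i * s i) := by group
          rw [hx, ha, mul_one]
        rw [htv] at hgt
        omega
      · have h2 : Npar cs (s i) (v⁻¹ * t * v) = 0 := by
          rw [Npar_simple, if_neg]
          intro h; exact hcase h.symm
        have h3 : Npar cs v t = 0 := by
          rcases zmod2_cases (Npar cs v t) with h | h
          · exact h
          · exfalso
            have hlt : ℓ (t * v) < ℓ v := (IH v (by omega)).mp h
            have hb : ℓ (t * w) ≤ ℓ (t * v) + 1 := by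
              rw [← hvw, ← mul_assoc]
              calc ℓ (t * v * s i) ≤ ℓ (t*v) + ℓ (s i) := cs.length_mul_le _ _
                _ = ℓ (t*v) + 1 := by rw [cs.length_simple]
            omega
        rw [hsplit, h2, h3] at hN
        exact absurd hN (by decide)
    · intro hlt
      have hw' : ℓ (t * w) ≤ n := by omega
      have htt : t * (t * w) = w := by rw [← mul_assoc, ht.mul_self, one_mul]
      have h0 : Npar cs (t * w) t = 0 := by
        rcases zmod2_cases (Npar cs (t*w) t) with h | h
        · exact h
        · exfalso
          have := (IH (t * w) hw').mp h
          rw [htt] at this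
          omega
      have hsum : Npar cs (t * w) t = Npar cs t t + Npar cs w (t⁻¹ * t * t) :=
        Npar_mul cs t w t
      have h5 : t⁻¹ * t * t = t := by group
      rw [h5, Npar_reflection_self cs ht, h0] at hsum
      rcases zmod2_cases (Npar cs w t) with h | h
      · exfalso
        rw [h, add_zero] at hsum
        exact absurd hsum.symm (by decide)
      · exact h

/-- **Strong exchange property.** -/
theorem strong_exchange (ω : List B) {t : W} (ht : cs.IsReflection t)
    (h : ℓ (t * π ω) < ℓ (π ω)) :
    ∃ j, j < ω.length ∧ t * π ω = π (ω.eraseIdx j) := by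
  have hN : Npar cs (π ω) t = 1 :=
    (Npar_eq_one_iff cs ht (ℓ (π ω)) (π ω) le_rfl).mpr h
  rw [Npar_eq_cnt] at hN
  have hmem : t ∈ cs.leftInvSeq ω := by
    by_contra hmem
    have hz : cnt cs ω t = 0 := by
      apply List.sum_eq_zero
      intro x hx
      rw [List.mem_map] at hx
      obtain ⟨y, hy, rfl⟩ := hx
      rw [if_neg]
      intro hh; exact hmem (hh ▸ hy)
    rw [hz] at hN
    exact absurd hN (by decide)
  obtain ⟨j, hj, hget⟩ := List.getElem_of_mem hmem
  have hj' : j < ω.length := by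
    rw [← cs.length_leftInvSeq ω]; exact hj
  refine ⟨j, hj', ?_⟩
  have hgd := cs.getD_leftInvSeq_mul_wordProd ω j
  rw [List.getD_eq_getElem (cs.leftInvSeq ω) 1 hj, hget] at hgd
  exact hgd


/-- Deletion property: a non-reduced word admits a shorter sublist with the same product. -/
lemma deletion : ∀ {ω : List B}, ¬ cs.IsReduced ω →
    ∃ σ, σ.Sublist ω ∧ σ.length < ω.length ∧ π σ = π ω := by
  intro ω h
  induction ω with
  | nil => exact absurd (by simp [CoxeterSystem.IsReduced]) h
  | cons i τ ih =>
    by_cases hτ : cs.IsReduced τ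
    · rcases cs.length_simple_mul (π τ) i with h2 | h2
      · exfalso
        apply h
        show ℓ (π (i :: τ)) = (i :: τ).length
        rw [cs.wordProd_cons, h2, hτ, List.length_cons]
      · have hlt : ℓ (s i * π τ) < ℓ (π τ) := by omega
        obtain ⟨j, hj, hdel⟩ := strong_exchange cs τ (cs.isReflection_simple i) hlt
        refine ⟨τ.eraseIdx j, (List.eraseIdx_sublist τ j).trans (List.sublist_cons_self i τ),
          ?_, ?_⟩
        · have := List.length_eraseIdx_add_one hj
          rw [List.length_cons]
          omega
        · rw [← hdel, cs.wordProd_cons]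
    · obtain ⟨σ, hs, hl, hp⟩ := ih hτ
      refine ⟨i :: σ, hs.cons₂ i, ?_, ?_⟩
      · simpa using Nat.succ_lt_succ hl
      · rw [cs.wordProd_cons, cs.wordProd_cons, hp]

/-- Every word has a reduced sublist with the same product. -/
lemma exists_reduced_sublist (ω : List B) :
    ∃ σ, σ.Sublist ω ∧ cs.IsReduced σ ∧ π σ = π ω := by
  suffices h : ∀ n (ω : List B), ω.length ≤ n →
      ∃ σ, σ.Sublist ω ∧ cs.IsReduced σ ∧ π σ = π ω from h ω.length ω le_rfl
  intro n
  induction n with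
  | zero =>
    intro ω hω
    have : ω = [] := List.length_eq_zero_iff.mp (Nat.le_antisymm hω (Nat.zero_le _))
    subst this
    exact ⟨[], List.Sublist.refl _, by simp [CoxeterSystem.IsReduced], rfl⟩
  | succ n IH =>
    intro ω hω
    by_cases hred : cs.IsReduced ω
    · exact ⟨ω, List.Sublist.refl _, hred, rfl⟩
    · obtain ⟨σ, hsub, hlen, hprod⟩ := deletion cs hred
      obtain ⟨σ', hsub', hred', hprod'⟩ := IH σ (by omega)
      exact ⟨σ', hsub'.trans hsub, hred', by rw [hprod', hprod]⟩

lemma bruhatLE_refl (w : W) : BruhatLE cs w w := by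
  obtain ⟨ω, hred, hw⟩ := cs.exists_reduced_word' w
  exact ⟨ω, hred, hw.symm, ω, List.Sublist.refl ω, hw.symm⟩

lemma length_le_of_bruhatLE {u v : W} (h : BruhatLE cs u v) : ℓ u ≤ ℓ v := by
  obtain ⟨ω, hred, hv, σ, hsub, hu⟩ := h
  calc ℓ u = ℓ (π σ) := by rw [hu]
    _ ≤ σ.length := cs.length_wordProd_le σ
    _ ≤ ω.length := hsub.length_le
    _ = ℓ v := by rw [← hv]; exact hred.symm

lemma eq_of_bruhatLE_of_length_ge {u v : W} (h : BruhatLE cs u v) (hl : ℓ v ≤ ℓ u) :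
    u = v := by
  obtain ⟨ω, hred, hv, σ, hsub, hu⟩ := h
  have h1 : ω.length ≤ σ.length := by
    have h2 : ℓ (π σ) ≤ σ.length := cs.length_wordProd_le σ
    have h3 : ℓ (π ω) = ω.length := hred
    rw [hu] at h2
    rw [hv] at h3
    omega
  have : σ = ω := hsub.eq_of_length_le h1
  subst this
  rw [← hu, hv]

/-- One (upward) step in the Bruhat chain order. -/
def CStep (a b : W) : Prop := ∃ t, cs.IsReflection t ∧ b = t * a ∧ ℓ a < ℓ b

/-- The Bruhat chain order. -/
def Cle : W → W → Prop := Relation.ReflTransGen (CStep cs)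

/-- Subword property relative to every reduced word. -/
def EveryRed (u v : W) : Prop :=
  ∀ τ : List B, cs.IsReduced τ → π τ = v → ∃ σ, σ.Sublist τ ∧ π σ = u

lemma everyRed_of_cle {u v : W} (h : Cle cs u v) : EveryRed cs u v := by
  induction h with
  | refl => exact fun τ _ hτ => ⟨τ, List.Sublist.refl τ, hτ⟩
  | tail hab hbc ih =>
    rename_i b c
    obtain ⟨t, hrt, hc, hlt⟩ := hbc
    intro τ hred hτ
    have hltv : ℓ (t * π τ) < ℓ (π τ) := by
      rw [hτ, hc, ← mul_assoc, hrt.mul_self, one_mul]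
      rw [← hc]
      exact hlt
    obtain ⟨j, hj, hdel⟩ := strong_exchange cs τ hrt hltv
    have hb : π (τ.eraseIdx j) = b := by
      rw [← hdel, hτ, hc, ← mul_assoc, hrt.mul_self, one_mul]
    obtain ⟨κ, hκsub, hκred, hκprod⟩ := exists_reduced_sublist cs (τ.eraseIdx j)
    obtain ⟨σ, hσ, hσp⟩ := ih κ hκred (by rw [hκprod, hb])
    exact ⟨σ, hσ.trans (hκsub.trans (List.eraseIdx_sublist τ j)), hσp⟩

lemma bruhatLE_of_cle {u v : W} (h : Cle cs u v) : BruhatLE cs u v := by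
  obtain ⟨τ, hred, hτ⟩ := cs.exists_reduced_word' v
  obtain ⟨σ, hσ, hσp⟩ := everyRed_of_cle cs h τ hred hτ.symm
  exact ⟨τ, hred, hτ.symm, σ, hσ, hσp⟩

/-- A reduced word for `s i * b` prepended with `i` is a reduced word for `b`,
when `i` is a left descent of `b`. -/
lemma cons_reduced_of_descent {b : W} {i : B} (hdesc : ℓ (s i * b) < ℓ b)
    {κ : List B} (hκred : cs.IsReduced κ) (hκ : π κ = s i * b) :
    cs.IsReduced (i :: κ) ∧ π (i :: κ) = b := by
  have ha : s i * s i = 1 := cs.simple_mul_simple_self i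
  have hprod : π (i :: κ) = b := by
    rw [cs.wordProd_cons, hκ, ← mul_assoc, ha, one_mul]
  have hlb : ℓ (s i * b) + 1 = ℓ b := by
    rcases cs.length_simple_mul b i with h | h
    · omega
    · exact h
  constructor
  · show ℓ (π (i :: κ)) = (i :: κ).length
    rw [hprod, List.length_cons]
    have : ℓ (π κ) = κ.length := hκred
    rw [hκ] at this
    omega
  · exact hprod

/-- Lifting at the subword level, from the every-reduced-word property. -/
lemma lift_of_everyRed {a b : W} {i : B} (h : EveryRed cs a b)
    (hdesc : ℓ (s i * b) < ℓ b) :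
    BruhatLE cs a (s i * b) ∨ BruhatLE cs (s i * a) (s i * b) := by
  obtain ⟨κ, hκred, hκ⟩ := cs.exists_reduced_word' (s i * b)
  obtain ⟨hiκred, hiκprod⟩ := cons_reduced_of_descent cs hdesc hκred hκ.symm
  obtain ⟨σ, hσ, hσp⟩ := h (i :: κ) hiκred hiκprod
  rcases List.sublist_cons_iff.mp hσ with hcase | ⟨σ', rfl, hσ'⟩
  · exact Or.inl ⟨κ, hκred, hκ.symm, σ, hcase, hσp⟩
  · right
    have ha : s i * s i = 1 := cs.simple_mul_simple_self i
    have hp : π σ' = s i * a := by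
      rw [cs.wordProd_cons] at hσp
      rw [← hσp, ← mul_assoc, ha, one_mul]
    exact ⟨κ, hκred, hκ.symm, σ', hσ', hp⟩

/-- In the corner case: if `c ≤ c'` (every reduced word sense), `i` a left descent of `c'`,
then `s i * c ≤ c'`. -/
lemma sle_simple_mul_of_everyRed {c c' : W} {i : B} (h : EveryRed cs c c')
    (hdesc : ℓ (s i * c') < ℓ c') : BruhatLE cs (s i * c) c' := by
  rcases lift_of_everyRed cs h hdesc with hca | hca
  · obtain ⟨τ, hτred, hτ, σ, hσ, hσp⟩ := hca
    obtain ⟨h1, h2⟩ := cons_reduced_of_descent cs hdesc hτred hτ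
    exact ⟨i :: τ, h1, h2, i :: σ, hσ.cons₂ i, by rw [cs.wordProd_cons, hσp]⟩
  · obtain ⟨τ, hτred, hτ, σ, hσ, hσp⟩ := hca
    obtain ⟨h1, h2⟩ := cons_reduced_of_descent cs hdesc hτred hτ
    exact ⟨i :: τ, h1, h2, σ, hσ.trans (List.sublist_cons_self i τ), hσp⟩

/-- Chain lifting by a simple reflection (with induction hypothesis as argument). -/
lemma chain_lift (n : ℕ)
    (IH : ∀ v : W, ℓ v ≤ n → ∀ u : W, BruhatLE cs u v → Cle cs u v)
    (i : B) {a b : W} (h : Cle cs a b) :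
    ℓ b ≤ n → Cle cs (if ℓ a < ℓ (s i * a) then s i * a else a)
      (if ℓ b < ℓ (s i * b) then s i * b else b) := by
  induction h with
  | refl => intro _; exact Relation.ReflTransGen.refl
  | tail hab hbc ih =>
    rename_i b' c'
    intro hcn
    obtain ⟨t, hrt, hc, hlt⟩ := hbc
    have hb'n : ℓ b' ≤ n := by omega
    have step1 := ih hb'n
    have ha : s i * s i = 1 := cs.simple_mul_simple_self i
    have key : Cle cs (if ℓ b' < ℓ (s i * b') then s i * b' else b')
        (if ℓ c' < ℓ (s i * c') then s i * c' else c') := by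
      have hne2 : ℓ (s i * c') ≠ ℓ c' := cs.length_simple_mul_ne c' i
      by_cases h1 : ℓ b' < ℓ (s i * b') <;> by_cases h2 : ℓ c' < ℓ (s i * c')
      · rw [if_pos h1, if_pos h2]
        apply Relation.ReflTransGen.single
        refine ⟨s i * t * (s i)⁻¹, hrt.conj (s i), ?_, ?_⟩
        · rw [hc]
          have hinv : (s i)⁻¹ = s i := inv_eq_of_mul_eq_one_right ha
          rw [hinv]
          calc s i * (t * b') = s i * t * (s i * s i) * b' := by rw [ha]; group
            _ = s i * t * s i * (s i * b') := by group
        · have hup1 : ℓ (s i * b') = ℓ b' + 1 := by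
            rcases cs.length_simple_mul b' i with h | h <;> omega
          omega
      · rw [if_pos h1, if_neg h2]
        have hdesc : ℓ (s i * c') < ℓ c' := by omega
        have hE : EveryRed cs b' c' :=
          everyRed_of_cle cs (Relation.ReflTransGen.single ⟨t, hrt, hc, hlt⟩)
        exact IH c' hcn (s i * b') (sle_simple_mul_of_everyRed cs hE hdesc)
      · rw [if_neg h1, if_pos h2]
        exact (Relation.ReflTransGen.single ⟨t, hrt, hc, hlt⟩).tail
          ⟨s i, cs.isReflection_simple i, rfl, h2⟩
      · rw [if_neg h1, if_neg h2]
        exact Relation.ReflTransGen.single ⟨t, hrt, hc, hlt⟩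
    exact step1.trans key

/-- Subword implies chain. -/
theorem cle_of_sle : ∀ n (v : W), ℓ v ≤ n → ∀ u : W, BruhatLE cs u v → Cle cs u v := by
  intro n
  induction n with
  | zero =>
    intro v hv u hu
    obtain ⟨ω, hred, hπ, σ, hsub, hu0⟩ := hu
    have hωlen : ω.length = 0 := by
      have h1 : ℓ (π ω) = ω.length := hred
      rw [hπ] at h1
      omega
    have hω : ω = [] := List.length_eq_zero_iff.mp hωlen
    subst hω
    have hσ : σ = [] := List.sublist_nil.mp hsub
    subst hσ
    have h1 : v = 1 := by rw [← hπ, cs.wordProd_nil]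
    have h2 : u = 1 := by rw [← hu0, cs.wordProd_nil]
    rw [h1, h2]
    exact Relation.ReflTransGen.refl
  | succ n IH =>
    intro v hv u hu
    obtain ⟨ω, hred, hπ, σ0, hsub0, hu0⟩ := hu
    obtain ⟨ω', hsub1, hred', hueq⟩ := exists_reduced_sublist cs σ0
    have hsub : ω'.Sublist ω := hsub1.trans hsub0
    have huω' : π ω' = u := by rw [hueq, hu0]
    cases ω with
    | nil =>
      have hv1 : v = 1 := by rw [← hπ, cs.wordProd_nil]
      have hω' : ω' = [] := List.sublist_nil.mp hsub
      have hu1 : u = 1 := by rw [← huω', hω', cs.wordProd_nil]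
      rw [hv1, hu1]
      exact Relation.ReflTransGen.refl
    | cons j μ =>
      have hμred : cs.IsReduced μ := by
        have := CoxeterSystem.IsReduced.drop hred 1
        simpa using this
      have hμlen : ℓ (π μ) = μ.length := hμred
      have hvlen : ℓ v = μ.length + 1 := by
        rw [← hπ]
        have h3 : ℓ (π (j::μ)) = (j::μ).length := hred
        simpa using h3
      have hvs : v = s j * π μ := by rw [← hπ, cs.wordProd_cons]
      have hμn : ℓ (π μ) ≤ n := by omega
      have hstep : CStep cs (π μ) v := ⟨s j, cs.isReflection_simple j, hvs, by omega⟩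
      rcases List.sublist_cons_iff.mp hsub with hcase | ⟨μ', rfl, hμ'⟩
      · have hsle : BruhatLE cs u (π μ) := ⟨μ, hμred, rfl, ω', hcase, huω'⟩
        exact (IH (π μ) hμn u hsle).tail hstep
      · have hμ'red : cs.IsReduced μ' := by
          have := CoxeterSystem.IsReduced.drop hred' 1
          simpa using this
        have hu₁ : u = s j * π μ' := by rw [← huω', cs.wordProd_cons]
        have hulen : ℓ u = μ'.length + 1 := by
          rw [← huω']
          have h3 : ℓ (π (j::μ')) = (j::μ').length := hred'
          simpa using h3
        have hμ'len : ℓ (π μ') = μ'.length := hμ'red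
        have hasc_u : ℓ (π μ') < ℓ (s j * π μ') := by
          rw [← hu₁]
          omega
        have hasc_v : ℓ (π μ) < ℓ (s j * π μ) := by
          rw [← hvs]
          omega
        have hsle₁ : BruhatLE cs (π μ') (π μ) := ⟨μ, hμred, rfl, μ', hμ', rfl⟩
        have hc₁ : Cle cs (π μ') (π μ) := IH (π μ) hμn (π μ') hsle₁
        have hlift := chain_lift cs n IH j hc₁ hμn
        rw [if_pos hasc_u, if_pos hasc_v] at hlift
        rw [hu₁, hvs]
        exact hlift

lemma everyRed_of_sle {u v : W} (h : BruhatLE cs u v) : EveryRed cs u v :=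
  everyRed_of_cle cs (cle_of_sle cs (ℓ v) v le_rfl u h)

lemma bruhatLE_trans {u v w : W} (h1 : BruhatLE cs u v) (h2 : BruhatLE cs v w) :
    BruhatLE cs u w :=
  bruhatLE_of_cle cs ((cle_of_sle cs (ℓ v) v le_rfl u h1).trans
    (cle_of_sle cs (ℓ w) w le_rfl v h2))

/-- The key lifting lemma for the main theorem. -/
lemma lift_min {a b c : W} (i : B) (hab : BruhatLE cs a b)
    (hca : BruhatLE cs c a) (hcsa : BruhatLE cs c (s i * a)) :
    BruhatLE cs c (s i * b) := by
  rcases cs.length_simple_mul b i with hup | hdown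
  · have hb : BruhatLE cs b (s i * b) := by
      obtain ⟨τ, hred, hτ⟩ := cs.exists_reduced_word' b
      refine ⟨i :: τ, ?_, ?_, τ, List.sublist_cons_self i τ, hτ.symm⟩
      · show ℓ (π (i :: τ)) = (i :: τ).length
        have h1 : ℓ (π τ) = τ.length := hred
        rw [cs.wordProd_cons, ← hτ, hup, List.length_cons, ← h1, hτ]
      · rw [cs.wordProd_cons, ← hτ]
    exact bruhatLE_trans cs (bruhatLE_trans cs hca hab) hb
  · have hdesc : ℓ (s i * b) < ℓ b := by omega
    rcases lift_of_everyRed cs (everyRed_of_sle cs hab) hdesc with h | h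
    · exact bruhatLE_trans cs hca h
    · exact bruhatLE_trans cs hcsa h


lemma foldr_max_bound : ∀ (l : List ℕ) (m : ℕ), m ∈ l → m ≤ l.foldr max 0 := by
  intro l
  induction l with
  | nil => intro m hm; cases hm
  | cons a l ih =>
    intro m hm
    rcases List.mem_cons.mp hm with rfl | hm
    · exact le_max_left _ _
    · exact le_trans (ih m hm) (le_max_right _ _)

lemma chain'_append_singleton {l : List ℕ} {j : ℕ} (hch : l.Chain' (· < ·))
    (hbd : ∀ m ∈ l, m < j) : (l ++ [j]).Chain' (· < ·) := by
  show List.IsChain _ _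
  rw [List.isChain_append]
  refine ⟨hch, List.isChain_singleton j, ?_⟩
  intro x hx y hy
  rw [List.head?_cons, Option.mem_some_iff] at hy
  subst hy
  exact hbd x (List.mem_of_mem_getLast? hx)

lemma concat_decomp {idx : List ℕ} {j : ℕ} (hch : idx.Chain' (· < ·))
    (hbd : ∀ m ∈ idx, m < j + 1) (hj : j ∈ idx) :
    ∃ idx₀, idx = idx₀ ++ [j] ∧ (∀ m ∈ idx₀, m < j) ∧ idx₀.Chain' (· < ·) := by
  rcases List.eq_nil_or_concat idx with rfl | ⟨l, a, rfl⟩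
  · cases hj
  · rw [List.concat_eq_append] at *
    have hpair : List.Pairwise (· < ·) (l ++ [a]) := List.isChain_iff_pairwise.mp hch
    have hmax : ∀ m ∈ l, m < a := by
      intro m hm
      exact (List.pairwise_append.mp hpair).2.2 m hm a (List.mem_singleton_self a)
    have haj : a = j := by
      rcases List.mem_append.mp hj with h | h
      · have h1 : j < a := hmax j h
        have h2 : a < j + 1 := hbd a (List.mem_append_right l (List.mem_singleton_self a))
        omega
      · exact (List.mem_singleton.mp h).symm
    subst haj
    refine ⟨l, rfl, hmax, ?_⟩
    exact (List.isChain_iff_pairwise.mpr ((List.pairwise_append.mp hpair).1))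

end BruhatAux

open BruhatAux in
/-- Corollary on sequences of simple reflections: given a (possibly infinite) sequence
`s₁, s₂, …` of simple reflections (here indexed by `seq : ℕ → B`, so `s_{j+1}` is the
simple reflection at index `seq j`), a subset `K` with unique Bruhat-minimal element `u`,
and the recursively defined sequence `u₀ = u`, `u_{j+1} = u_j ∧ s_{j+1} u_j`, the sequence
`(u_j)` is eventually constant and its stable value is the unique minimal element of the
union `⋃_{S'} w(S') K` over all finite subsequences `S' : s_{i₁}, …, s_{i_m}` (with
`i₁ < ⋯ < i_m`), where `w(S') = s_{i_m} ⋯ s_{i₁}`. -/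
theorem stmt_1 (cs : CoxeterSystem M W) (seq : ℕ → B) (K : Set W) (u : W)
    (hK : IsBrMin cs K u) (uu : ℕ → W) (h0 : uu 0 = u)
    (hstep : ∀ j : ℕ,
      (uu (j + 1) = uu j ∨ uu (j + 1) = cs.simple (seq j) * uu j) ∧
      BruhatLE cs (uu (j + 1)) (uu j) ∧
      BruhatLE cs (uu (j + 1)) (cs.simple (seq j) * uu j)) :
    ∃ N : ℕ, (∀ j, N ≤ j → uu j = uu N) ∧
      IsBrMin cs
        {x | ∃ idx : List ℕ, idx.Chain' (· < ·) ∧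
          ∃ k ∈ K, x = cs.wordProd ((idx.map seq).reverse) * k}
        (uu N) := by
  classical
  have hdec : ∀ j, BruhatLE cs (uu (j + 1)) (uu j) := fun j => (hstep j).2.1
  have hlen : ∀ j, cs.length (uu (j + 1)) ≤ cs.length (uu j) :=
    fun j => length_le_of_bruhatLE cs (hdec j)
  have hmono : ∀ j k, j ≤ k → cs.length (uu k) ≤ cs.length (uu j) := by
    intro j k hjk
    induction k with
    | zero =>
      have : j = 0 := Nat.le_zero.mp hjk
      subst this; exact le_rfl
    | succ k ih =>
      rcases Nat.lt_or_ge j (k + 1) with h | h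
      · exact le_trans (hlen k) (ih (Nat.lt_succ_iff.mp h))
      · have : j = k + 1 := le_antisymm hjk h
        subst this; exact le_rfl
  -- minimal length index
  obtain ⟨N, hN⟩ : ∃ N : ℕ, ∀ j : ℕ, cs.length (uu N) ≤ cs.length (uu j) := by
    have hne : (Set.range (fun j => cs.length (uu j))).Nonempty := ⟨_, ⟨0, rfl⟩⟩
    obtain ⟨N, hNm⟩ := Nat.sInf_mem hne
    refine ⟨N, fun j => ?_⟩
    have hNm' : cs.length (uu N) = sInf (Set.range fun j => cs.length (uu j)) := hNm
    rw [hNm']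
    exact Nat.sInf_le ⟨j, rfl⟩
  have hconst : ∀ j, N ≤ j → uu j = uu N := by
    intro j hj
    induction j with
    | zero =>
      have : N = 0 := Nat.le_zero.mp hj
      rw [this]
    | succ j ih =>
      rcases Nat.lt_or_ge N (j + 1) with h | h
      · have hjN : N ≤ j := Nat.lt_succ_iff.mp h
        have hj' : uu j = uu N := ih hjN
        have heq : cs.length (uu (j + 1)) = cs.length (uu j) := by
          have h1 := hlen j
          have h2 := hN (j + 1)
          rw [← hj'] at h2
          omega
        have := eq_of_bruhatLE_of_length_ge cs (hdec j) (le_of_eq heq.symm)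
        rw [this, hj']
      · have : N = j + 1 := le_antisymm hj h
        rw [this]
  -- membership of all uu j in the set
  have hmem : ∀ j, ∃ idx : List ℕ, idx.Chain' (· < ·) ∧ (∀ m ∈ idx, m < j) ∧
      uu j = cs.wordProd ((idx.map seq).reverse) * u := by
    intro j
    induction j with
    | zero =>
      refine ⟨[], List.isChain_nil, by simp, ?_⟩
      simp [h0]
    | succ j ih =>
      obtain ⟨idx, hch, hbd, heq⟩ := ih
      rcases (hstep j).1 with he | he
      · exact ⟨idx, hch, fun m hm => Nat.lt_succ_of_lt (hbd m hm), by rw [he, heq]⟩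
      · refine ⟨idx ++ [j], chain'_append_singleton hch hbd, ?_, ?_⟩
        · intro m hm
          rcases List.mem_append.mp hm with h | h
          · exact Nat.lt_succ_of_lt (hbd m h)
          · rw [List.mem_singleton.mp h]; exact Nat.lt_succ_self j
        · rw [he, heq]
          have : ((idx ++ [j]).map seq).reverse = seq j :: (idx.map seq).reverse := by
            rw [List.map_append, List.reverse_append]
            simp
          rw [this, cs.wordProd_cons, mul_assoc]
  -- minimality
  have hminP : ∀ j (idx : List ℕ), idx.Chain' (· < ·) → (∀ m ∈ idx, m < j) →
      ∀ k ∈ K, BruhatLE cs (uu j) (cs.wordProd ((idx.map seq).reverse) * k) := by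
    intro j
    induction j with
    | zero =>
      intro idx hch hbd k hk
      have hnil : idx = [] := by
        cases idx with
        | nil => rfl
        | cons a l => exact absurd (hbd a (List.mem_cons_self (a := a) (l := l))) (Nat.not_lt_zero a)
      subst hnil
      simp only [List.map_nil, List.reverse_nil, cs.wordProd_nil, one_mul]
      rw [h0]
      exact hK.2 k hk
    | succ j ih =>
      intro idx hch hbd k hk
      by_cases hjmem : j ∈ idx
      · obtain ⟨idx₀, rfl, hbd₀, hch₀⟩ := concat_decomp hch hbd hjmem
        have hy := ih idx₀ hch₀ hbd₀ k hk
        have hx : cs.wordProd (((idx₀ ++ [j]).map seq).reverse) * k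
            = cs.simple (seq j) * (cs.wordProd ((idx₀.map seq).reverse) * k) := by
          have : ((idx₀ ++ [j]).map seq).reverse = seq j :: (idx₀.map seq).reverse := by
            rw [List.map_append, List.reverse_append]
            simp
          rw [this, cs.wordProd_cons, mul_assoc]
        rw [hx]
        exact lift_min cs (seq j) hy (hstep j).2.1 (hstep j).2.2
      · have hbd' : ∀ m ∈ idx, m < j := by
          intro m hm
          have h1 : m < j + 1 := hbd m hm
          have h2 : m ≠ j := fun h => hjmem (h ▸ hm)
          omega
        exact bruhatLE_trans cs (hstep j).2.1 (ih idx hch hbd' k hk)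
  refine ⟨N, hconst, ?_, ?_⟩
  · -- membership
    obtain ⟨idx, hch, _, heq⟩ := hmem N
    exact ⟨idx, hch, u, hK.1, heq⟩
  · rintro x ⟨idx, hch, k, hk, rfl⟩
    set j := max N ((idx.foldr max 0) + 1) with hj
    have hjN : N ≤ j := le_max_left _ _
    have hbd : ∀ m ∈ idx, m < j := by
      intro m hm
      have h1 : m ≤ idx.foldr max 0 := foldr_max_bound idx m hm
      have h2 : idx.foldr max 0 + 1 ≤ j := le_max_right _ _
      omega
    have := hminP j idx hch hbd k hk
    rw [hconst j hjN] at this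
    exact this
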